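/- Concurrent execution on disjointly split stores can reach stuck states: for the program with rules r1 @ A,B ⇔ C and r2 @ D,E ⇔ F, the state with goals {A#3, D#4} and store {A#3, B#1, D#4, E#2}, if each goal executes Drop against only its half of a split store ({A#3,E#2} and {B#1,D#4} respectively), reaches the goal-free state ⟨∅, {A#3,B#1,D#4,E#2}⟩ whose store still contains rule head instances of both r1 and r2 (hence its abstraction {A,B,D,E} is not a final abstract store under ⤳_A). -/
import Mathlib


/-- Constraints of the program `r1 @ A,B ⇔ C` and `r2 @ D,E ⇔ F`. -/
inductive K where
  | A | B | C | D | E | F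
deriving DecidableEq

/-- Abstract CHR semantics of the program: r1 rewrites {A,B} to {C},
r2 rewrites {D,E} to {F}. -/
inductive KStep : Multiset K → Multiset K → Prop
  | r1 (S : Multiset K) : KStep ({K.A, K.B} + S) (K.C ::ₘ S)
  | r2 (S : Multiset K) : KStep ({K.D, K.E} + S) (K.F ::ₘ S)

/-- `c` has a matching rule partner in the visible store `V`. -/
def hasPartner (c : K) (V : Multiset (K × ℕ)) : Prop :=
  (c = K.A ∧ ∃ j, (K.B, j) ∈ V) ∨ (c = K.B ∧ ∃ j, (K.A, j) ∈ V) ∨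
  (c = K.D ∧ ∃ j, (K.E, j) ∈ V) ∨ (c = K.E ∧ ∃ j, (K.D, j) ∈ V)

/-- Drop of an active goal by a thread that sees only the part `V` of the
store: the goal is dropped when no Simplify/Propagate applies with partners
found in the visible store. -/
inductive DropWrt (V : Multiset (K × ℕ)) :
    Multiset (K × ℕ) × Multiset (K × ℕ) →
    Multiset (K × ℕ) × Multiset (K × ℕ) → Prop
  | drop (c : K) (i : ℕ) (G Sn : Multiset (K × ℕ))
      (h : ¬ hasPartner c V) :
      DropWrt V ((c, i) ::ₘ G, Sn) (G, Sn)

/-- Strip identifiers. -/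
def dropIds (Sn : Multiset (K × ℕ)) : Multiset K := Sn.map Prod.fst

/-- Concurrent execution on disjointly split stores reaches a stuck state:
with goals {A#3, D#4} and store {A#3,B#1,D#4,E#2}, each goal dropping
against only its half of the split store reaches the goal-free state with
the same store, whose abstraction {A,B,D,E} still admits abstract Rewrite
steps by both r1 and r2, hence is not a final store. -/
theorem split_store_stuck :
    Relation.ReflTransGen
      (fun σ σ' => DropWrt {(K.A, 3), (K.E, 2)} σ σ' ∨
                   DropWrt {(K.B, 1), (K.D, 4)} σ σ')
      ({(K.A, 3), (K.D, 4)}, {(K.A, 3), (K.B, 1), (K.D, 4), (K.E, 2)})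
      (0, {(K.A, 3), (K.B, 1), (K.D, 4), (K.E, 2)}) ∧
    dropIds {(K.A, 3), (K.B, 1), (K.D, 4), (K.E, 2)} =
      {K.A, K.B, K.D, K.E} ∧
    KStep {K.A, K.B, K.D, K.E} {K.C, K.D, K.E} ∧
    KStep {K.A, K.B, K.D, K.E} {K.F, K.A, K.B} := by
  refine ⟨?_, ?_, ?_, ?_⟩
  · refine Relation.ReflTransGen.head
      (b := ({(K.D, 4)}, {(K.A, 3), (K.B, 1), (K.D, 4), (K.E, 2)}))
      (Or.inl (DropWrt.drop K.A 3 {(K.D, 4)} _ (by simp [hasPartner])))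
      (Relation.ReflTransGen.head
        (b := (0, {(K.A, 3), (K.B, 1), (K.D, 4), (K.E, 2)}))
        (Or.inr (DropWrt.drop K.D 4 0 _ (by simp [hasPartner])))
        Relation.ReflTransGen.refl)
  · decide
  · have h : ({K.A, K.B, K.D, K.E} : Multiset K) = {K.A, K.B} + {K.D, K.E} := by decide
    have h2 : ({K.C, K.D, K.E} : Multiset K) = K.C ::ₘ {K.D, K.E} := by decide
    rw [h, h2]; exact KStep.r1 _
  · have h : ({K.A, K.B, K.D, K.E} : Multiset K) = {K.D, K.E} + {K.A, K.B} := by decide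
    have h2 : ({K.F, K.A, K.B} : Multiset K) = K.F ::ₘ {K.A, K.B} := by decide
    rw [h, h2]; exact KStep.r2 _
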